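/- If π, π' ∈ S_n satisfy π' = p_i(π) = swap_i(π) ≠ π for some i ∈ [n-1], then p_i restricts to a bijection from s⁻¹(π) to s⁻¹(π'); in particular |s⁻¹(π)| = |s⁻¹(π')|. -/

import Mathlib

/-- `l` is a permutation of `{1, …, n}`, written as a word. -/
def IsPermList (n : ℕ) (l : List ℕ) : Prop := l.Perm (List.range' 1 n)

/-- The word obtained from `l` by exchanging the positions of the entries `i` and `i+1`. -/
def swapEntries (i : ℕ) (l : List ℕ) : List ℕ :=
  l.map fun x => if x = i then i + 1 else if x = i + 1 then i else x

/-- Some entry larger than `i+1` appears (strictly) between the entries `i` and `i+1`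
in the word `l`. -/
def ToggleApplies (i : ℕ) (l : List ℕ) : Prop :=
  ∃ a ∈ l, i + 1 < a ∧
    min (l.idxOf i) (l.idxOf (i + 1)) < l.idxOf a ∧
    l.idxOf a < max (l.idxOf i) (l.idxOf (i + 1))

open scoped Classical in
/-- The polyurethane toggle `p i`. -/
noncomputable def toggle (i : ℕ) (l : List ℕ) : List ℕ :=
  if ToggleApplies i l then swapEntries i l else l

lemma max_getD_mem (l : List ℕ) (h : l ≠ []) : l.max?.getD 0 ∈ l := by
  rcases hm : l.max? with _ | m'
  · exact absurd (List.max?_eq_none_iff.mp hm) h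
  · simpa using List.max?_mem hm

lemma length_takeWhile_lt (p : ℕ → Bool) (l : List ℕ) (x : ℕ) (hx : x ∈ l) (hpx : p x = false) :
    (l.takeWhile p).length < l.length := by
  rcases Nat.lt_or_ge (l.takeWhile p).length l.length with h | h
  · exact h
  · have := List.takeWhile_eq_self_iff.mp ((List.takeWhile_sublist p).eq_of_length_le h) x hx
    rw [hpx] at this; exact absurd this (by simp)

lemma length_dropWhile_tail_lt (p : ℕ → Bool) (l : List ℕ) (h : l ≠ []) :
    ((l.dropWhile p).tail).length < l.length := by
  have h1 : (l.dropWhile p).length ≤ l.length := (List.dropWhile_sublist _).length_le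
  have h2 : ((l.dropWhile p).tail).length ≤ (l.dropWhile p).length - 1 := by
    simp [List.length_tail]
  have : 0 < l.length := List.length_pos_iff.mpr h
  omega

/-- West's stack-sorting map `s`: `s([]) = []` and `s(LmR) = s(L) s(R) m`,
where `m` is the largest entry. -/
def stackSort : List ℕ → List ℕ
  | [] => []
  | a :: rest =>
    stackSort ((a :: rest).takeWhile (· ≠ (a :: rest).max?.getD 0)) ++
      stackSort (((a :: rest).dropWhile (· ≠ (a :: rest).max?.getD 0)).tail) ++
      [(a :: rest).max?.getD 0]
termination_by l => l.length
decreasing_by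
  · exact length_takeWhile_lt _ _ _ (max_getD_mem (a :: rest) (by simp)) (by simp)
  · exact length_dropWhile_tail_lt _ _ (by simp)

section Dev

/-- The value-swapping function. -/
def swFun (i : ℕ) : ℕ → ℕ := fun x => if x = i then i + 1 else if x = i + 1 then i else x

lemma swapEntries_eq_map (i : ℕ) (l : List ℕ) : swapEntries i l = l.map (swFun i) := rfl

lemma swFun_swFun (i x : ℕ) : swFun i (swFun i x) = x := by
  unfold swFun; split_ifs <;> omega

lemma swFun_eq_self (i x : ℕ) (h1 : x ≠ i) (h2 : x ≠ i + 1) : swFun i x = x := by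
  unfold swFun; split_ifs <;> omega

lemma swapEntries_swapEntries (i : ℕ) (l : List ℕ) : swapEntries i (swapEntries i l) = l := by
  rw [swapEntries_eq_map, swapEntries_eq_map, List.map_map]
  have : swFun i ∘ swFun i = id := funext fun x => swFun_swFun i x
  rw [this, List.map_id]

lemma max?_spec (l : List ℕ) (h : l ≠ []) :
    l.max?.getD 0 ∈ l ∧ ∀ x ∈ l, x ≤ l.max?.getD 0 := by
  cases hm : l.max? with
  | none => exact absurd (List.max?_eq_none_iff.mp hm) h
  | some m =>
    have := List.max?_eq_some_iff.mp hm
    simpa using this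

lemma max?_eq_of (l : List ℕ) (m : ℕ) (hm : m ∈ l) (hle : ∀ x ∈ l, x ≤ m) :
    l.max? = some m :=
  List.max?_eq_some_iff.mpr ⟨hm, hle⟩

lemma stackSort_unfold (l : List ℕ) (h : l ≠ []) :
    stackSort l = stackSort (l.takeWhile (· ≠ l.max?.getD 0)) ++
      stackSort ((l.dropWhile (· ≠ l.max?.getD 0)).tail) ++ [l.max?.getD 0] := by
  cases l with
  | nil => exact absurd rfl h
  | cons a rest => rw [stackSort]

lemma stackSort_append (L R : List ℕ) (m : ℕ) (hL : ∀ x ∈ L, x < m) (hR : ∀ x ∈ R, x < m) :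
    stackSort (L ++ m :: R) = stackSort L ++ stackSort R ++ [m] := by
  have hne : (L ++ m :: R) ≠ [] := by simp
  have hmax : (L ++ m :: R).max? = some m := by
    refine max?_eq_of _ _ (by simp) ?_
    intro x hx
    rcases List.mem_append.mp hx with h | h
    · exact le_of_lt (hL x h)
    · rcases List.mem_cons.mp h with h | h
      · omega
      · exact le_of_lt (hR x h)
  rw [stackSort_unfold _ hne, hmax]
  simp only [Option.getD_some]
  have hLp : ∀ x ∈ L, (decide (x ≠ m)) = true := by
    intro x hx; simpa using (hL x hx).ne
  have h1 : (L ++ m :: R).takeWhile (fun x => decide (x ≠ m)) = L := by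
    rw [List.takeWhile_append_of_pos hLp, List.takeWhile_cons_of_neg (by simp)]
    simp
  have h2 : (L ++ m :: R).dropWhile (fun x => decide (x ≠ m)) = m :: R := by
    rw [List.dropWhile_append_of_pos hLp, List.dropWhile_cons_of_neg (by simp)]
  rw [h1, h2]
  rfl

lemma exists_decomp (l : List ℕ) (h : l ≠ []) (hnd : l.Nodup) :
    ∃ L m R, l = L ++ m :: R ∧ (∀ x ∈ L, x < m) ∧ (∀ x ∈ R, x < m) := by
  obtain ⟨hmem, hle⟩ := max?_spec l h
  obtain ⟨L, R, hLR⟩ := List.append_of_mem hmem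
  refine ⟨L, l.max?.getD 0, R, hLR, ?_, ?_⟩
  · intro x hx
    have hxl : x ∈ l := by rw [hLR]; simp [hx]
    have hne : x ≠ l.max?.getD 0 := by
      rintro rfl
      rw [hLR] at hnd
      exact (List.disjoint_of_nodup_append hnd) hx (by simp)
    exact lt_of_le_of_ne (hle x hxl) hne
  · intro x hx
    have hxl : x ∈ l := by rw [hLR]; simp [hx]
    have hne : x ≠ l.max?.getD 0 := by
      rintro rfl
      rw [hLR] at hnd
      have := (List.nodup_append.mp hnd).2.1
      simp at this
      exact this.1 hx
    exact lt_of_le_of_ne (hle x hxl) hne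

end Dev

section Dev2

lemma length_decomp {l L R : List ℕ} {m : ℕ} (h : l = L ++ m :: R) :
    L.length < l.length ∧ R.length < l.length := by
  subst h; simp; omega

lemma stackSort_perm_aux : ∀ (N : ℕ) (l : List ℕ), l.length ≤ N → l.Nodup →
    (stackSort l).Perm l := by
  intro N
  induction N with
  | zero =>
    intro l hl _
    have : l = [] := List.length_eq_zero_iff.mp (Nat.le_zero.mp hl)
    subst this
    simp [stackSort]
  | succ N ih =>
    intro l hl hnd
    rcases eq_or_ne l [] with rfl | hne
    · simp [stackSort]
    obtain ⟨L, m, R, hdec, hLlt, hRlt⟩ := exists_decomp l hne hnd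
    obtain ⟨hL1, hR1⟩ := length_decomp hdec
    have hndL : L.Nodup := by
      subst hdec; exact (List.nodup_append.mp hnd).1
    have hndR : R.Nodup := by
      subst hdec; exact (List.Nodup.of_cons (List.nodup_append.mp hnd).2.1)
    rw [hdec, stackSort_append L R m hLlt hRlt]
    have pL := ih L (by omega) hndL
    have pR := ih R (by omega) hndR
    have p1 : (stackSort L ++ stackSort R ++ [m]).Perm (L ++ R ++ [m]) :=
      (pL.append pR).append_right [m]
    have p2 : (L ++ R ++ [m]).Perm (L ++ m :: R) := by
      rw [List.append_assoc]
      exact List.Perm.append_left L (List.perm_append_singleton m R)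
    exact p1.trans p2

lemma stackSort_perm (l : List ℕ) (hnd : l.Nodup) : (stackSort l).Perm l :=
  stackSort_perm_aux l.length l le_rfl hnd

lemma stackSort_map_aux : ∀ (N : ℕ) (f : ℕ → ℕ) (l : List ℕ), l.length ≤ N → l.Nodup →
    (∀ x ∈ l, ∀ y ∈ l, x < y → f x < f y) →
    stackSort (l.map f) = (stackSort l).map f := by
  intro N
  induction N with
  | zero =>
    intro f l hl _ _
    have : l = [] := List.length_eq_zero_iff.mp (Nat.le_zero.mp hl)
    subst this; simp [stackSort]
  | succ N ih =>
    intro f l hl hnd hf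
    rcases eq_or_ne l [] with rfl | hne
    · simp [stackSort]
    obtain ⟨L, m, R, hdec, hLlt, hRlt⟩ := exists_decomp l hne hnd
    obtain ⟨hL1, hR1⟩ := length_decomp hdec
    have hndL : L.Nodup := by subst hdec; exact (List.nodup_append.mp hnd).1
    have hndR : R.Nodup := by
      subst hdec; exact (List.Nodup.of_cons (List.nodup_append.mp hnd).2.1)
    have hmemL : ∀ x ∈ L, x ∈ l := by intro x hx; rw [hdec]; simp [hx]
    have hmemR : ∀ x ∈ R, x ∈ l := by intro x hx; rw [hdec]; simp [hx]
    have hml : m ∈ l := by rw [hdec]; simp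
    have hfL : ∀ x ∈ L.map f, x < f m := by
      rintro x hx
      obtain ⟨y, hy, rfl⟩ := List.mem_map.mp hx
      exact hf y (hmemL y hy) m hml (hLlt y hy)
    have hfR : ∀ x ∈ R.map f, x < f m := by
      rintro x hx
      obtain ⟨y, hy, rfl⟩ := List.mem_map.mp hx
      exact hf y (hmemR y hy) m hml (hRlt y hy)
    rw [hdec, stackSort_append L R m hLlt hRlt]
    rw [show (L ++ m :: R).map f = L.map f ++ f m :: R.map f by simp]
    rw [stackSort_append (L.map f) (R.map f) (f m) hfL hfR]
    rw [ih f L (by omega) hndL (fun x hx y hy => hf x (hmemL x hx) y (hmemL y hy)),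
        ih f R (by omega) hndR (fun x hx y hy => hf x (hmemR x hx) y (hmemR y hy))]
    simp

lemma indexOf_map (f : ℕ → ℕ) (l : List ℕ) (x : ℕ)
    (hinj : ∀ y ∈ l, (f y = f x ↔ y = x)) :
    (l.map f).idxOf (f x) = l.idxOf x := by
  induction l with
  | nil => simp
  | cons a l ih =>
    rcases eq_or_ne a x with rfl | hne
    · simp
    · have hfa : f a ≠ f x := fun h => hne ((hinj a (by simp)).mp h)
      rw [List.map_cons, List.idxOf_cons_ne _ hfa, List.idxOf_cons_ne _ hne,
        ih (fun y hy => hinj y (by simp [hy]))]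

end Dev2

section Dev3

lemma TA_append_left (i : ℕ) (u v : List ℕ) (hi : i ∈ u) (hi1 : i + 1 ∈ u) :
    ToggleApplies i (u ++ v) ↔ ToggleApplies i u := by
  have e1 : (u ++ v).idxOf i = u.idxOf i := List.idxOf_append_of_mem hi
  have e2 : (u ++ v).idxOf (i + 1) = u.idxOf (i + 1) := List.idxOf_append_of_mem hi1
  have hu1 : u.idxOf i < u.length := List.idxOf_lt_length_iff.mpr hi
  have hu2 : u.idxOf (i + 1) < u.length := List.idxOf_lt_length_iff.mpr hi1
  constructor
  · rintro ⟨a, ha, hbig, hmin, hmax⟩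
    rw [e1, e2] at hmin hmax
    have hau : a ∈ u := by
      by_contra hau
      have := List.idxOf_append_of_notMem hau (l₂ := v)
      omega
    refine ⟨a, hau, hbig, ?_, ?_⟩ <;>
      rw [List.idxOf_append_of_mem hau] at hmin hmax <;> omega
  · rintro ⟨a, ha, hbig, hmin, hmax⟩
    refine ⟨a, by simp [ha], hbig, ?_, ?_⟩ <;>
      rw [e1, e2, List.idxOf_append_of_mem ha] <;> omega

lemma TA_append_right (i : ℕ) (u v : List ℕ) (hnd : (u ++ v).Nodup)
    (hi : i ∈ v) (hi1 : i + 1 ∈ v) :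
    ToggleApplies i (u ++ v) ↔ ToggleApplies i v := by
  have hdisj := List.disjoint_of_nodup_append hnd
  have hiu : i ∉ u := fun h => hdisj h hi
  have hi1u : i + 1 ∉ u := fun h => hdisj h hi1
  have e1 : (u ++ v).idxOf i = u.length + v.idxOf i := List.idxOf_append_of_notMem hiu
  have e2 : (u ++ v).idxOf (i + 1) = u.length + v.idxOf (i + 1) :=
    List.idxOf_append_of_notMem hi1u
  constructor
  · rintro ⟨a, ha, hbig, hmin, hmax⟩
    rw [e1, e2] at hmin hmax
    have hau : a ∉ u := by
      intro hau
      have := List.idxOf_append_of_mem hau (l₂ := v)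
      have := List.idxOf_lt_length_iff.mpr hau
      omega
    have hav : a ∈ v := by
      rcases List.mem_append.mp ha with h | h
      · exact absurd h hau
      · exact h
    have e3 : (u ++ v).idxOf a = u.length + v.idxOf a :=
      List.idxOf_append_of_notMem hau
    exact ⟨a, hav, hbig, by omega, by omega⟩
  · rintro ⟨a, ha, hbig, hmin, hmax⟩
    have hau : a ∉ u := fun h => hdisj h ha
    have e3 : (u ++ v).idxOf a = u.length + v.idxOf a :=
      List.idxOf_append_of_notMem hau
    exact ⟨a, by simp [ha], hbig, by omega, by omega⟩

lemma swapEntries_perm (i : ℕ) (l : List ℕ) (hnd : l.Nodup) (hi : i ∈ l) (hi1 : i + 1 ∈ l) :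
    (swapEntries i l).Perm l := by
  have h1 : l.Perm (i :: l.erase i) := List.perm_cons_erase hi
  have hi1e : i + 1 ∈ l.erase i := by
    have : i + 1 ∈ i :: l.erase i := h1.mem_iff.mp hi1
    rcases List.mem_cons.mp this with h | h
    · omega
    · exact h
  have h2 : (l.erase i).Perm ((i + 1) :: (l.erase i).erase (i + 1)) :=
    List.perm_cons_erase hi1e
  set l₂ := (l.erase i).erase (i + 1) with hl₂
  have hp : l.Perm (i :: (i + 1) :: l₂) := h1.trans (h2.cons i)
  have hnd2 : (i :: (i + 1) :: l₂).Nodup := hp.nodup hnd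
  have hil₂ : i ∉ l₂ := by
    intro h; exact (List.nodup_cons.mp hnd2).1 (by simp [h])
  have hi1l₂ : i + 1 ∉ l₂ := by
    intro h
    exact (List.nodup_cons.mp (List.nodup_cons.mp hnd2).2).1 h
  have hmap : (i :: (i + 1) :: l₂).map (swFun i) = (i + 1) :: i :: l₂ := by
    simp only [List.map_cons]
    rw [show swFun i i = i + 1 by simp [swFun]]
    rw [show swFun i (i + 1) = i by simp [swFun]]
    have hl₂map : l₂.map (swFun i) = l₂ := by
      rw [List.map_congr_left (g := id) (fun x hx => swFun_eq_self i x
        (fun h => hil₂ (h ▸ hx)) (fun h => hi1l₂ (h ▸ hx))), List.map_id]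
    rw [hl₂map]
  have q1 : (l.map (swFun i)).Perm ((i :: (i + 1) :: l₂).map (swFun i)) := hp.map _
  rw [hmap] at q1
  have q2 : ((i + 1) :: i :: l₂).Perm (i :: (i + 1) :: l₂) := List.Perm.swap i (i+1) l₂
  exact (q1.trans q2).trans hp.symm

lemma indexOf_map' (f : ℕ → ℕ) (l : List ℕ) (z x : ℕ) (hz : z = f x)
    (hinj : ∀ y ∈ l, (f y = f x ↔ y = x)) :
    (l.map f).idxOf z = l.idxOf x := by
  rw [hz]; exact indexOf_map f l x hinj

lemma indexOf_swapEntries_big (i a : ℕ) (l : List ℕ) (ha : i + 1 < a) :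
    (swapEntries i l).idxOf a = l.idxOf a := by
  rw [swapEntries_eq_map]
  refine indexOf_map' (swFun i) l a a (swFun_eq_self i a (by omega) (by omega)).symm ?_
  intro y hy
  rw [swFun_eq_self i a (by omega) (by omega)]
  constructor
  · intro h
    unfold swFun at h
    split_ifs at h <;> omega
  · intro h
    rw [h]
    exact swFun_eq_self i a (by omega) (by omega)

lemma indexOf_swapEntries_i (i : ℕ) (l : List ℕ) :
    (swapEntries i l).idxOf i = l.idxOf (i + 1) := by
  rw [swapEntries_eq_map]
  refine indexOf_map' (swFun i) l i (i + 1) (by simp [swFun]) ?_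
  intro y hy
  rw [show swFun i (i + 1) = i by simp [swFun]]
  constructor
  · intro h
    unfold swFun at h
    split_ifs at h <;> omega
  · intro h; rw [h]; simp [swFun]

lemma indexOf_swapEntries_i1 (i : ℕ) (l : List ℕ) :
    (swapEntries i l).idxOf (i + 1) = l.idxOf i := by
  rw [swapEntries_eq_map]
  refine indexOf_map' (swFun i) l (i + 1) i (by simp [swFun]) ?_
  intro y hy
  rw [show swFun i i = i + 1 by simp [swFun]]
  constructor
  · intro h
    unfold swFun at h
    split_ifs at h <;> omega
  · intro h; rw [h]; simp [swFun]

lemma TA_swapEntries (i : ℕ) (l : List ℕ) (h : ToggleApplies i l) :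
    ToggleApplies i (swapEntries i l) := by
  obtain ⟨a, ha, hbig, hmin, hmax⟩ := h
  refine ⟨a, ?_, hbig, ?_, ?_⟩
  · rw [swapEntries_eq_map]
    have : a = swFun i a := (swFun_eq_self i a (by omega) (by omega)).symm
    rw [this]
    exact List.mem_map_of_mem ha
  · rw [indexOf_swapEntries_big i a l hbig, indexOf_swapEntries_i, indexOf_swapEntries_i1]
    omega
  · rw [indexOf_swapEntries_big i a l hbig, indexOf_swapEntries_i, indexOf_swapEntries_i1]
    omega

end Dev3

section Dev4

lemma swapEntries_append (i : ℕ) (u v : List ℕ) :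
    swapEntries i (u ++ v) = swapEntries i u ++ swapEntries i v := by
  simp [swapEntries_eq_map]

lemma swapEntries_cons (i m : ℕ) (l : List ℕ) :
    swapEntries i (m :: l) = swFun i m :: swapEntries i l := by
  simp [swapEntries_eq_map, swFun]

lemma swapEntries_eq_of_not_mem (i : ℕ) (l : List ℕ) (h1 : i ∉ l) (h2 : i + 1 ∉ l) :
    swapEntries i l = l := by
  rw [swapEntries_eq_map,
    List.map_congr_left (g := id) (fun x hx => swFun_eq_self i x
      (fun h => h1 (h ▸ hx)) (fun h => h2 (h ▸ hx))), List.map_id]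

lemma swapEntries_lt_bound (i m : ℕ) (l : List ℕ) (hlt : ∀ x ∈ l, x < m) (him : i + 1 < m) :
    ∀ x ∈ swapEntries i l, x < m := by
  intro x hx
  rw [swapEntries_eq_map] at hx
  obtain ⟨y, hy, rfl⟩ := List.mem_map.mp hx
  have := hlt y hy
  unfold swFun
  split_ifs <;> omega

lemma mixed_map_left (i : ℕ) (l : List ℕ) (h : i + 1 ∉ l) :
    swapEntries i l = l.map (fun x => if x = i then i + 1 else x) := by
  rw [swapEntries_eq_map]
  refine List.map_congr_left (fun x hx => ?_)
  have : x ≠ i + 1 := fun hh => h (hh ▸ hx)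
  unfold swFun
  split_ifs <;> omega

lemma mixed_map_right (i : ℕ) (l : List ℕ) (h : i ∉ l) :
    swapEntries i l = l.map (fun x => if x = i + 1 then i else x) := by
  rw [swapEntries_eq_map]
  refine List.map_congr_left (fun x hx => ?_)
  have : x ≠ i := fun hh => h (hh ▸ hx)
  unfold swFun
  split_ifs <;> omega

lemma mixed_mono_left (i : ℕ) (l : List ℕ) (h : i + 1 ∉ l) :
    ∀ x ∈ l, ∀ y ∈ l, x < y → (if x = i then i + 1 else x) < (if y = i then i + 1 else y) := by
  intro x hx y hy hxy
  have hx1 : x ≠ i + 1 := fun hh => h (hh ▸ hx)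
  have hy1 : y ≠ i + 1 := fun hh => h (hh ▸ hy)
  split_ifs <;> omega

lemma mixed_mono_right (i : ℕ) (l : List ℕ) (h : i ∉ l) :
    ∀ x ∈ l, ∀ y ∈ l, x < y → (if x = i + 1 then i else x) < (if y = i + 1 then i else y) := by
  intro x hx y hy hxy
  have hx1 : x ≠ i := fun hh => h (hh ▸ hx)
  have hy1 : y ≠ i := fun hh => h (hh ▸ hy)
  split_ifs <;> omega

lemma main_aux : ∀ (N : ℕ) (l : List ℕ), l.length ≤ N → l.Nodup → ∀ i : ℕ, i ∈ l →
    i + 1 ∈ l → ToggleApplies i (stackSort l) →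
    ToggleApplies i l ∧ stackSort (swapEntries i l) = swapEntries i (stackSort l) := by
  intro N
  induction N with
  | zero =>
    intro l hl _ i hi _ _
    have : l = [] := List.length_eq_zero_iff.mp (Nat.le_zero.mp hl)
    subst this; simp at hi
  | succ N ih =>
    intro l hl hnd i hi hi1 hT
    have hne : l ≠ [] := by rintro rfl; simp at hi
    obtain ⟨L, m, R, hdec, hLlt, hRlt⟩ := exists_decomp l hne hnd
    subst hdec
    have hlen : L.length + (R.length + 1) ≤ N + 1 := by simpa using hl
    have hndL : L.Nodup := (List.nodup_append.mp hnd).1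
    have hndmR : (m :: R).Nodup := (List.nodup_append.mp hnd).2.1
    have hndR : R.Nodup := hndmR.of_cons
    have hdisj : List.Disjoint L (m :: R) := List.disjoint_of_nodup_append hnd
    have hmR : m ∉ R := (List.nodup_cons.mp hndmR).1
    have hmL : m ∉ L := fun h => hdisj h (List.mem_cons_self)
    have pL := stackSort_perm L hndL
    have pR := stackSort_perm R hndR
    have hS : stackSort (L ++ m :: R) = stackSort L ++ stackSort R ++ [m] :=
      stackSort_append L R m hLlt hRlt
    rw [hS] at hT
    have hi1m : i + 1 = m ∨ i + 1 < m := by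
      rcases List.mem_append.mp hi1 with h | h
      · right; exact hLlt _ h
      · rcases List.mem_cons.mp h with h | h
        · left; exact h
        · right; exact hRlt _ h
    rcases hi1m with hi1m | hi1m
    · -- m = i + 1 : contradiction with hT
      exfalso
      obtain ⟨a, ha, hbig, -, -⟩ := hT
      have ham : a ≤ m := by
        rcases List.mem_append.mp ha with h | h
        · rcases List.mem_append.mp h with h | h
          · exact le_of_lt (hLlt a (pL.mem_iff.mp h))
          · exact le_of_lt (hRlt a (pR.mem_iff.mp h))
        · simp at h; omega
      omega
    · -- i + 1 < m
      have him : i ≠ m := by omega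
      have hiLR : i ∈ L ∨ i ∈ R := by
        rcases List.mem_append.mp hi with h | h
        · left; exact h
        · rcases List.mem_cons.mp h with h | h
          · omega
          · right; exact h
      have hi1LR : i + 1 ∈ L ∨ i + 1 ∈ R := by
        rcases List.mem_append.mp hi1 with h | h
        · left; exact h
        · rcases List.mem_cons.mp h with h | h
          · omega
          · right; exact h
      have hndS : (stackSort L ++ stackSort R ++ [m]).Nodup := by
        rw [← hS]
        exact (stackSort_perm _ hnd).symm.nodup hnd
      rcases hiLR with hiL | hiR <;> rcases hi1LR with hi1L | hi1R
      · -- both in L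
        have hiR' : i ∉ R := fun h => hdisj hiL (List.mem_cons_of_mem m h)
        have hi1R' : i + 1 ∉ R := fun h => hdisj hi1L (List.mem_cons_of_mem m h)
        have hisL : i ∈ stackSort L := pL.mem_iff.mpr hiL
        have hi1sL : i + 1 ∈ stackSort L := pL.mem_iff.mpr hi1L
        rw [List.append_assoc] at hT
        have hT' : ToggleApplies i (stackSort L) :=
          (TA_append_left i (stackSort L) (stackSort R ++ [m]) hisL hi1sL).mp hT
        obtain ⟨hTAL, hEqL⟩ := ih L (by omega) hndL i hiL hi1L hT'
        constructor
        · exact (TA_append_left i L (m :: R) hiL hi1L).mpr hTAL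
        · have hswl : swapEntries i (L ++ m :: R) = swapEntries i L ++ m :: R := by
            rw [swapEntries_append, swapEntries_cons,
              swFun_eq_self i m (by omega) (by omega),
              swapEntries_eq_of_not_mem i R hiR' hi1R']
          rw [hswl, hS,
            stackSort_append (swapEntries i L) R m
              (swapEntries_lt_bound i m L hLlt hi1m) hRlt, hEqL,
            swapEntries_append, swapEntries_append,
            swapEntries_eq_of_not_mem i (stackSort R)
              (fun h => hiR' (pR.mem_iff.mp h)) (fun h => hi1R' (pR.mem_iff.mp h)),
            swapEntries_cons, swFun_eq_self i m (by omega) (by omega)]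
          rfl
      · -- i in L, i+1 in R (mixed)
        have hiR' : i ∉ R := fun h => hdisj hiL (List.mem_cons_of_mem m h)
        have hi1L' : i + 1 ∉ L := fun h => hdisj h (List.mem_cons_of_mem m hi1R)
        constructor
        · refine ⟨m, by simp, by omega, ?_, ?_⟩ <;>
          · rw [List.idxOf_append_of_mem hiL,
              List.idxOf_append_of_notMem hmL,
              List.idxOf_append_of_notMem hi1L',
              List.idxOf_cons_self,
              List.idxOf_cons_ne _ (show m ≠ i + 1 by omega)]
            have := List.idxOf_lt_length_iff.mpr hiL
            omega
        · have hswl : swapEntries i (L ++ m :: R) =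
              L.map (fun x => if x = i then i + 1 else x) ++
                m :: R.map (fun x => if x = i + 1 then i else x) := by
            rw [swapEntries_append, swapEntries_cons,
              swFun_eq_self i m (by omega) (by omega),
              mixed_map_left i L hi1L', mixed_map_right i R hiR']
          have hbL : ∀ x ∈ L.map (fun x => if x = i then i + 1 else x), x < m := by
            intro x hx
            obtain ⟨y, hy, rfl⟩ := List.mem_map.mp hx
            have := hLlt y hy
            split_ifs <;> omega
          have hbR : ∀ x ∈ R.map (fun x => if x = i + 1 then i else x), x < m := by
            intro x hx
            obtain ⟨y, hy, rfl⟩ := List.mem_map.mp hx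
            have := hRlt y hy
            split_ifs <;> omega
          rw [hswl, hS, stackSort_append _ _ m hbL hbR,
            stackSort_map_aux L.length _ L le_rfl hndL (mixed_mono_left i L hi1L'),
            stackSort_map_aux R.length _ R le_rfl hndR (mixed_mono_right i R hiR'),
            swapEntries_append, swapEntries_append,
            mixed_map_left i (stackSort L) (fun h => hi1L' (pL.mem_iff.mp h)),
            mixed_map_right i (stackSort R) (fun h => hiR' (pR.mem_iff.mp h)),
            swapEntries_cons, swFun_eq_self i m (by omega) (by omega)]
          rfl
      · -- i in R, i+1 in L (mixed)
        have hiL' : i ∉ L := fun h => hdisj h (List.mem_cons_of_mem m hiR)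
        have hi1R' : i + 1 ∉ R := fun h => hdisj hi1L (List.mem_cons_of_mem m h)
        constructor
        · refine ⟨m, by simp, by omega, ?_, ?_⟩ <;>
          · rw [List.idxOf_append_of_mem hi1L,
              List.idxOf_append_of_notMem hmL,
              List.idxOf_append_of_notMem hiL',
              List.idxOf_cons_self,
              List.idxOf_cons_ne _ (show m ≠ i by omega)]
            have := List.idxOf_lt_length_iff.mpr hi1L
            omega
        · have hswl : swapEntries i (L ++ m :: R) =
              L.map (fun x => if x = i + 1 then i else x) ++
                m :: R.map (fun x => if x = i then i + 1 else x) := by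
            rw [swapEntries_append, swapEntries_cons,
              swFun_eq_self i m (by omega) (by omega),
              mixed_map_right i L hiL', mixed_map_left i R hi1R']
          have hbL : ∀ x ∈ L.map (fun x => if x = i + 1 then i else x), x < m := by
            intro x hx
            obtain ⟨y, hy, rfl⟩ := List.mem_map.mp hx
            have := hLlt y hy
            split_ifs <;> omega
          have hbR : ∀ x ∈ R.map (fun x => if x = i then i + 1 else x), x < m := by
            intro x hx
            obtain ⟨y, hy, rfl⟩ := List.mem_map.mp hx
            have := hRlt y hy
            split_ifs <;> omega
          rw [hswl, hS, stackSort_append _ _ m hbL hbR,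
            stackSort_map_aux L.length _ L le_rfl hndL (mixed_mono_right i L hiL'),
            stackSort_map_aux R.length _ R le_rfl hndR (mixed_mono_left i R hi1R'),
            swapEntries_append, swapEntries_append,
            mixed_map_right i (stackSort L) (fun h => hiL' (pL.mem_iff.mp h)),
            mixed_map_left i (stackSort R) (fun h => hi1R' (pR.mem_iff.mp h)),
            swapEntries_cons, swFun_eq_self i m (by omega) (by omega)]
          rfl
      · -- both in R
        have hiL' : i ∉ L := fun h => hdisj h (List.mem_cons_of_mem m hiR)
        have hi1L' : i + 1 ∉ L := fun h => hdisj h (List.mem_cons_of_mem m hi1R)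
        have hisR : i ∈ stackSort R := pR.mem_iff.mpr hiR
        have hi1sR : i + 1 ∈ stackSort R := pR.mem_iff.mpr hi1R
        rw [List.append_assoc] at hT
        have hndS' : (stackSort L ++ (stackSort R ++ [m])).Nodup := by
          rwa [← List.append_assoc]
        have hT1 : ToggleApplies i (stackSort R ++ [m]) :=
          (TA_append_right i (stackSort L) (stackSort R ++ [m]) hndS'
            (by simp [hisR]) (by simp [hi1sR])).mp hT
        have hT2 : ToggleApplies i (stackSort R) :=
          (TA_append_left i (stackSort R) [m] hisR hi1sR).mp hT1
        obtain ⟨hTAR, hEqR⟩ := ih R (by omega) hndR i hiR hi1R hT2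
        constructor
        · have h1 : ToggleApplies i (m :: R) := by
            have := (TA_append_right i [m] R (by simpa using hndmR) hiR hi1R).mpr hTAR
            simpa using this
          exact (TA_append_right i L (m :: R) hnd
            (List.mem_cons_of_mem m hiR) (List.mem_cons_of_mem m hi1R)).mpr h1
        · have hswl : swapEntries i (L ++ m :: R) = L ++ m :: swapEntries i R := by
            rw [swapEntries_append, swapEntries_cons,
              swFun_eq_self i m (by omega) (by omega),
              swapEntries_eq_of_not_mem i L hiL' hi1L']
          rw [hswl, hS,
            stackSort_append L (swapEntries i R) m hLlt
              (swapEntries_lt_bound i m R hRlt hi1m), hEqR,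
            swapEntries_append, swapEntries_append,
            swapEntries_eq_of_not_mem i (stackSort L)
              (fun h => hiL' (pL.mem_iff.mp h)) (fun h => hi1L' (pL.mem_iff.mp h)),
            swapEntries_cons, swFun_eq_self i m (by omega) (by omega)]
          rfl

end Dev4

section DevFinal

lemma main_result (l : List ℕ) (hnd : l.Nodup) (i : ℕ) (hi : i ∈ l) (hi1 : i + 1 ∈ l)
    (hT : ToggleApplies i (stackSort l)) :
    ToggleApplies i l ∧ stackSort (swapEntries i l) = swapEntries i (stackSort l) :=
  main_aux l.length l le_rfl hnd i hi hi1 hT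

end DevFinal

/-- If `π' = p i (π) = swapᵢ(π) ≠ π`, then `p i` restricts to a bijection from
`s⁻¹(π)` onto `s⁻¹(π')`; in particular the fertilities agree. -/
theorem toggle_bijOn_preimages (n i : ℕ) (hi₁ : 1 ≤ i) (hi₂ : i ≤ n - 1)
    (π π' : List ℕ) (hπ : IsPermList n π) (hπ' : IsPermList n π')
    (h₁ : π' = toggle i π) (h₂ : π' = swapEntries i π) (h₃ : π' ≠ π) :
    Set.BijOn (toggle i) {σ : List ℕ | IsPermList n σ ∧ stackSort σ = π}
        {σ : List ℕ | IsPermList n σ ∧ stackSort σ = π'} ∧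
      Nat.card {σ : List ℕ // IsPermList n σ ∧ stackSort σ = π} =
        Nat.card {σ : List ℕ // IsPermList n σ ∧ stackSort σ = π'} := by
  have hn : 2 ≤ n := by omega
  have hndR : (List.range' 1 n).Nodup := List.nodup_range'
  have hiR : i ∈ List.range' 1 n := by rw [List.mem_range'_1]; omega
  have hi1R : i + 1 ∈ List.range' 1 n := by rw [List.mem_range'_1]; omega
  have hTπ : ToggleApplies i π := by
    by_contra h
    rw [toggle, if_neg h] at h₁
    exact h₃ h₁
  have hTπ' : ToggleApplies i π' := h₂ ▸ TA_swapEntries i π hTπ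
  have hswππ' : swapEntries i π' = π := by rw [h₂, swapEntries_swapEntries]
  -- the key pointwise fact
  have key : ∀ (ρ pp : List ℕ), IsPermList n ρ → stackSort ρ = pp → ToggleApplies i pp →
      ToggleApplies i ρ ∧ toggle i ρ = swapEntries i ρ ∧
        IsPermList n (swapEntries i ρ) ∧ stackSort (swapEntries i ρ) = swapEntries i pp := by
    intro ρ pp hρ hs hTpp
    have hndρ : ρ.Nodup := hρ.nodup_iff.mpr hndR
    have hiρ : i ∈ ρ := hρ.mem_iff.mpr hiR
    have hi1ρ : i + 1 ∈ ρ := hρ.mem_iff.mpr hi1R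
    have hTs : ToggleApplies i (stackSort ρ) := by rwa [hs]
    obtain ⟨hTAρ, hEq⟩ := main_result ρ hndρ i hiρ hi1ρ hTs
    refine ⟨hTAρ, by rw [toggle, if_pos hTAρ], ?_, by rw [hEq, hs]⟩
    exact (swapEntries_perm i ρ hndρ hiρ hi1ρ).trans hρ
  have hm1 : Set.MapsTo (toggle i) {σ : List ℕ | IsPermList n σ ∧ stackSort σ = π}
      {σ : List ℕ | IsPermList n σ ∧ stackSort σ = π'} := by
    rintro σ ⟨hσ1, hσ2⟩
    obtain ⟨-, ht, hp, hs⟩ := key σ π hσ1 hσ2 hTπ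
    exact ⟨by rwa [ht], by rw [ht, hs, ← h₂]⟩
  have hm2 : Set.MapsTo (toggle i) {σ : List ℕ | IsPermList n σ ∧ stackSort σ = π'}
      {σ : List ℕ | IsPermList n σ ∧ stackSort σ = π} := by
    rintro τ ⟨hτ1, hτ2⟩
    obtain ⟨-, ht, hp, hs⟩ := key τ π' hτ1 hτ2 hTπ'
    exact ⟨by rwa [ht], by rw [ht, hs, hswππ']⟩
  have hinv : ∀ (ρ pp : List ℕ), IsPermList n ρ → stackSort ρ = pp → ToggleApplies i pp →
      toggle i (toggle i ρ) = ρ := by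
    intro ρ pp hρ hs hTpp
    obtain ⟨hTAρ, ht, -, -⟩ := key ρ pp hρ hs hTpp
    have hTAρ' : ToggleApplies i (swapEntries i ρ) := TA_swapEntries i ρ hTAρ
    rw [ht, toggle, if_pos hTAρ', swapEntries_swapEntries]
  have hbij : Set.BijOn (toggle i) {σ : List ℕ | IsPermList n σ ∧ stackSort σ = π}
      {σ : List ℕ | IsPermList n σ ∧ stackSort σ = π'} := by
    refine Set.InvOn.bijOn ⟨?_, ?_⟩ hm1 hm2
    · rintro σ ⟨hσ1, hσ2⟩
      exact hinv σ π hσ1 hσ2 hTπ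
    · rintro τ ⟨hτ1, hτ2⟩
      exact hinv τ π' hτ1 hτ2 hTπ'
  exact ⟨hbij, Nat.card_congr (Set.BijOn.equiv (toggle i) hbij)⟩
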